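/- If B is a binary self-orthogonal code containing the all-ones vector and every codeword of B has weight divisible by 4 (doubly even), and B is self-dual of length n, then n ≡ 0 (mod 8). -/

import Mathlib

open Finset

namespace Stmt11Aux

abbrev G := GaussianInt

def ii : G := Zsqrtd.sqrtd

def χ (x : ZMod 2) : G := if x = 0 then 1 else -1

lemma χ_add : ∀ a b : ZMod 2, χ (a + b) = χ a * χ b := by decide

lemma χ_sum {α : Type*} (s : Finset α) (f : α → ZMod 2) :
    χ (∑ j ∈ s, f j) = ∏ j ∈ s, χ (f j) := by
  induction s using Finset.cons_induction with
  | empty => simp [χ]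
  | cons a s ha ih => rw [Finset.sum_cons, Finset.prod_cons, χ_add, ih]

def wt {n : ℕ} (v : Fin n → ZMod 2) : ℕ := (univ.filter fun i => v i ≠ 0).card

lemma zmod2_cases : ∀ x : ZMod 2, x = 0 ∨ x = 1 := by decide

lemma prod_expand {n : ℕ} (c : Fin n → ZMod 2) :
    ∏ j, (1 + ii * χ (c j)) =
      ∑ v : Fin n → ZMod 2, ii ^ wt v * χ (∑ j, c j * v j) := by
  have h := Finset.prod_add (fun j : Fin n => ii * χ (c j)) (fun _ => (1 : G)) univ
  simp only [Finset.prod_const_one, mul_one] at h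
  have hcomm : ∀ j : Fin n, 1 + ii * χ (c j) = ii * χ (c j) + 1 := fun j => add_comm _ _
  rw [Finset.prod_congr rfl (fun j _ => hcomm j), h]
  refine Finset.sum_nbij' (i := fun t => fun j => if j ∈ t then (1 : ZMod 2) else 0)
    (j := fun v => univ.filter fun j => v j ≠ 0) ?_ ?_ ?_ ?_ ?_
  · intro t _; exact Finset.mem_univ _
  · intro v _; exact Finset.mem_powerset.mpr (Finset.subset_univ _)
  · intro t _
    ext j
    simp only [Finset.mem_filter, Finset.mem_univ, true_and]
    by_cases hj : j ∈ t <;> simp [hj]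
  · intro v _
    funext j
    rcases zmod2_cases (v j) with h | h <;> simp [h]
  · intro t ht
    have hwt : wt (fun j => if j ∈ t then (1 : ZMod 2) else 0) = t.card := by
      unfold wt
      congr 1
      ext j
      simp only [Finset.mem_filter, Finset.mem_univ, true_and]
      by_cases hj : j ∈ t <;> simp [hj]
    have hdot : (∑ j, c j * (if j ∈ t then (1 : ZMod 2) else 0)) = ∑ j ∈ t, c j := by
      simp only [mul_ite, mul_one, mul_zero]
      rw [Finset.sum_ite_mem, Finset.univ_inter]
    rw [hwt, hdot, χ_sum, Finset.prod_mul_distrib, Finset.prod_const]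

lemma ii_pow_four : ii ^ 4 = 1 := by decide
lemma one_add_ii_pow_four : (1 + ii) ^ 4 = -4 := by decide
lemma one_sub_ii_pow_four : (1 - ii) ^ 4 = -4 := by decide
lemma one_add_ii_sq : (1 + ii) ^ 2 = 2 * ii := by decide
lemma χ_one_eq : χ 1 = -1 := by decide

lemma ii_pow_of_dvd {w : ℕ} (h : 4 ∣ w) : ii ^ w = 1 := by
  obtain ⟨k, hk⟩ := h
  rw [hk, pow_mul, ii_pow_four, one_pow]

lemma prod_term {n : ℕ} (c : Fin n → ZMod 2) (h4 : 4 ∣ wt c) :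
    ∏ j, (1 + ii * χ (c j)) = (1 + ii) ^ n := by
  rw [← Finset.prod_filter_mul_prod_filter_not univ (fun j => c j ≠ 0)]
  have h1 : ∀ j ∈ univ.filter (fun j => c j ≠ 0), 1 + ii * χ (c j) = 1 - ii := by
    intro j hj
    simp only [Finset.mem_filter] at hj
    rcases zmod2_cases (c j) with h | h
    · exact absurd h hj.2
    · rw [h, χ_one_eq]; ring
  have h2 : ∀ j ∈ univ.filter (fun j => ¬c j ≠ 0), 1 + ii * χ (c j) = 1 + ii := by
    intro j hj
    simp only [Finset.mem_filter, not_not] at hj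
    simp [hj.2, χ]
  rw [Finset.prod_congr rfl h1, Finset.prod_congr rfl h2, Finset.prod_const, Finset.prod_const]
  have hcards := Finset.card_filter_add_card_filter_not
    (s := (univ : Finset (Fin n))) (p := fun j => c j ≠ 0)
  have hcard : (univ.filter (fun j => ¬c j ≠ 0)).card = n - wt c := by
    have : wt c = (univ.filter (fun j => c j ≠ 0)).card := rfl
    simp only [Finset.card_univ, Fintype.card_fin] at hcards
    omega
  have hle : wt c ≤ n := by
    have := Finset.card_filter_le (univ : Finset (Fin n)) (fun j => c j ≠ 0)
    simpa [wt] using this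
  rw [hcard]
  have hwt' : (univ.filter (fun j => c j ≠ 0)).card = wt c := rfl
  rw [hwt']
  obtain ⟨k, hk⟩ := h4
  have heq : (1 - ii) ^ wt c = (1 + ii) ^ wt c := by
    rw [hk, pow_mul, pow_mul, one_sub_ii_pow_four, one_add_ii_pow_four]
  rw [heq, ← pow_add]
  congr 1
  omega

end Stmt11Aux

open Stmt11Aux

/-- A binary code is self-dual if it equals its dual. -/
def IsSelfDualBin {n : ℕ} (B : Submodule (ZMod 2) (Fin n → ZMod 2)) : Prop :=
  ∀ x, x ∈ B ↔ ∀ y ∈ B, ∑ i, x i * y i = 0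

/-- A doubly even binary self-dual code containing the all-ones vector has
length divisible by 8. -/
theorem stmt11 {n : ℕ} (B : Submodule (ZMod 2) (Fin n → ZMod 2))
    (hsd : IsSelfDualBin B) (hone : (fun _ => 1) ∈ B)
    (hde : ∀ b ∈ B, 4 ∣ (univ.filter fun i => b i ≠ 0).card) :
    n % 8 = 0 := by
  classical
  set K : Finset (Fin n → ZMod 2) := univ.filter (· ∈ B) with hKdef
  have hKmem : ∀ c, c ∈ K ↔ c ∈ B := by intro c; simp [hKdef]
  have hdvd : ∀ c ∈ K, 4 ∣ wt c := fun c hc => hde c ((hKmem c).mp hc)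
  -- orthogonality of characters
  have horth : ∀ v : Fin n → ZMod 2,
      (∑ c ∈ K, χ (∑ j, c j * v j)) = if v ∈ B then (K.card : G) else 0 := by
    intro v
    by_cases hv : v ∈ B
    · rw [if_pos hv]
      have : ∀ c ∈ K, χ (∑ j, c j * v j) = 1 := by
        intro c hc
        have h0 : (∑ j, c j * v j) = 0 := (hsd c).mp ((hKmem c).mp hc) v hv
        rw [h0]; rfl
      rw [Finset.sum_congr rfl this, Finset.sum_const, nsmul_eq_mul, mul_one]
    · rw [if_neg hv]
      have hne : ¬∀ y ∈ B, ∑ i, v i * y i = 0 := fun h => hv ((hsd v).mpr h)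
      push_neg at hne
      obtain ⟨c0, hc0B, hc0⟩ := hne
      have hc0v : (∑ j, c0 j * v j) = 1 := by
        have hcomm : (∑ j, c0 j * v j) = ∑ j, v j * c0 j :=
          Finset.sum_congr rfl fun j _ => mul_comm _ _
        rw [hcomm]
        rcases zmod2_cases (∑ j, v j * c0 j) with h | h
        · exact absurd h hc0
        · exact h
      have hself : ∀ x : ZMod 2, x + x = 0 := by decide
      have key : ∑ c ∈ K, χ (∑ j, (c j + c0 j) * v j) = ∑ c ∈ K, χ (∑ j, c j * v j) := by
        refine Finset.sum_nbij' (i := fun c => c + c0) (j := fun c => c + c0) ?_ ?_ ?_ ?_ ?_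
        · intro a ha
          exact (hKmem _).mpr (B.add_mem ((hKmem a).mp ha) hc0B)
        · intro a ha
          exact (hKmem _).mpr (B.add_mem ((hKmem a).mp ha) hc0B)
        · intro a _
          funext j
          show a j + c0 j + c0 j = a j
          rw [add_assoc, hself, add_zero]
        · intro a _
          funext j
          show a j + c0 j + c0 j = a j
          rw [add_assoc, hself, add_zero]
        · intro a _
          rfl
      have hterm : ∀ c ∈ K, χ (∑ j, (c j + c0 j) * v j) = -χ (∑ j, c j * v j) := by
        intro c _
        have hsplit : (∑ j, (c j + c0 j) * v j) = (∑ j, c j * v j) + ∑ j, c0 j * v j := by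
          rw [← Finset.sum_add_distrib]
          exact Finset.sum_congr rfl fun j _ => add_mul _ _ _
        rw [hsplit, hc0v, χ_add, χ_one_eq]
        ring
      have hS' : ∑ c ∈ K, χ (∑ j, (c j + c0 j) * v j)
          = -∑ c ∈ K, χ (∑ j, c j * v j) := by
        rw [Finset.sum_congr rfl hterm]
        exact Finset.sum_neg_distrib _
      have hS : ∑ c ∈ K, χ (∑ j, c j * v j) = -∑ c ∈ K, χ (∑ j, c j * v j) :=
        key.symm.trans hS'
      have h2S : (2 : G) * ∑ c ∈ K, χ (∑ j, c j * v j) = 0 := by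
        rw [two_mul]
        nth_rewrite 1 [hS]
        ring
      rcases mul_eq_zero.mp h2S with h | h
      · exact absurd h (by decide)
      · exact h
  -- main identity
  have lhs : ∑ c ∈ K, ∏ j, (1 + ii * χ (c j)) = (K.card : G) * (1 + ii) ^ n := by
    rw [Finset.sum_congr rfl (fun c hc => prod_term c (hdvd c hc)), Finset.sum_const,
      nsmul_eq_mul]
  have rhs : ∑ c ∈ K, ∏ j, (1 + ii * χ (c j)) = (K.card : G) * (K.card : G) := by
    calc ∑ c ∈ K, ∏ j, (1 + ii * χ (c j))
        = ∑ c ∈ K, ∑ v : Fin n → ZMod 2, ii ^ wt v * χ (∑ j, c j * v j) :=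
          Finset.sum_congr rfl fun c _ => prod_expand c
      _ = ∑ v : Fin n → ZMod 2, ∑ c ∈ K, ii ^ wt v * χ (∑ j, c j * v j) := Finset.sum_comm
      _ = ∑ v : Fin n → ZMod 2, ii ^ wt v * ∑ c ∈ K, χ (∑ j, c j * v j) := by
          simp [Finset.mul_sum]
      _ = ∑ v : Fin n → ZMod 2, ii ^ wt v * (if v ∈ B then (K.card : G) else 0) := by
          exact Finset.sum_congr rfl fun v _ => by rw [horth v]
      _ = ∑ v ∈ K, ii ^ wt v * (K.card : G) := by
          simp only [mul_ite, mul_zero]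
          rw [← Finset.sum_filter]
      _ = ∑ v ∈ K, (K.card : G) :=
          Finset.sum_congr rfl fun v hv => by rw [ii_pow_of_dvd (hdvd v hv), one_mul]
      _ = (K.card : G) * (K.card : G) := by rw [Finset.sum_const, nsmul_eq_mul]
  have main : (K.card : G) * (1 + ii) ^ n = (K.card : G) * (K.card : G) := lhs.symm.trans rhs
  have hK0 : (0 : Fin n → ZMod 2) ∈ K := (hKmem 0).mpr B.zero_mem
  have hcast : (K.card : G) ≠ 0 :=
    Nat.cast_ne_zero.mpr (Finset.card_pos.mpr ⟨0, hK0⟩).ne'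
  have hpow : (1 + ii) ^ n = (K.card : G) := mul_left_cancel₀ hcast main
  -- take norms
  have hnorm : (2 : ℤ) ^ n = (K.card : ℤ) * K.card := by
    have h := congrArg Zsqrtd.norm hpow
    rw [Zsqrtd.norm_natCast] at h
    have hmp : Zsqrtd.norm ((1 + ii) ^ n) = (Zsqrtd.norm (1 + ii)) ^ n :=
      map_pow Zsqrtd.normMonoidHom (1 + ii) n
    rw [hmp] at h
    have h2 : Zsqrtd.norm (1 + ii) = 2 := by decide
    rw [h2] at h
    exact h
  have hnat : 2 ^ n = K.card * K.card := by exact_mod_cast hnorm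
  have hdvdN : K.card ∣ 2 ^ n := ⟨K.card, hnat⟩
  obtain ⟨k, _, hNk⟩ := (Nat.dvd_prime_pow Nat.prime_two).mp hdvdN
  have hn2k : n = 2 * k := by
    have : (2 : ℕ) ^ n = 2 ^ (2 * k) := by
      rw [hnat, hNk, ← pow_add, two_mul]
    exact Nat.pow_right_injective (le_refl 2) this
  -- extract i^k = 1
  have hiik : (2 : G) ^ k * ii ^ k = (2 : G) ^ k := by
    have h1 : (1 + ii) ^ n = (2 : G) ^ k * ii ^ k := by
      rw [hn2k, pow_mul, one_add_ii_sq, mul_pow]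
    have h2 : ((K.card : ℕ) : G) = (2 : G) ^ k := by
      rw [hNk]; push_cast; ring
    rw [← h1, hpow, h2]
  have hii1 : ii ^ k = 1 := by
    have h2k : (2 : G) ^ k ≠ 0 := pow_ne_zero k (by decide)
    exact mul_left_cancel₀ h2k (by rw [hiik, mul_one])
  have hkmod : k % 4 = 0 := by
    have hk4 : ii ^ (k % 4) = 1 := by
      conv at hii1 => rw [← Nat.div_add_mod k 4]
      rw [pow_add, pow_mul, ii_pow_four, one_pow, one_mul] at hii1
      exact hii1
    rcases (by omega : k % 4 = 0 ∨ k % 4 = 1 ∨ k % 4 = 2 ∨ k % 4 = 3) with h | h | h | h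
    · exact h
    all_goals (rw [h] at hk4; exact absurd hk4 (by decide))
  omega
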